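/- If f is a set function on a finite set V that is an expectation (a finite convex combination) of functions of the form S ↦ |IBS_ω(S)| where each IBS_ω is the influence blocking set in some live-path graph with a common negative seed set N₀, then f is monotone and submodular on subsets of V \ N₀. -/
import Mathlib


variable {V : Type*}

/-- There is a walk of length `n` (number of edges) from `u` to `w` along relation `E`. -/
inductive PathLen (E : V → V → Prop) : V → V → ℕ → Prop
  | refl (v : V) : PathLen E v v 0
  | tail {u v w : V} {n : ℕ} : PathLen E u v n → E v w → PathLen E u w (n + 1)

/-- Shortest-path distance (number of edges) from the set `S` to `v` along edges `E`,
`⊤` if no path exists. -/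
noncomputable def eDist (E : V → V → Prop) (S : Set V) (v : V) : ℕ∞ :=
  sInf {n : ℕ∞ | ∃ m : ℕ, n = (m : ℕ∞) ∧ ∃ s ∈ S, PathLen E s v m}

/-- An edge relation is "live-path" if every vertex has at most one in-edge. -/
def LivePathRel (E : V → V → Prop) : Prop :=
  ∀ ⦃u u' v : V⦄, E u v → E u' v → u = u'

/-- `l` is a path (list of successive vertices) along `E` from `s` to `v`. -/
def IsPathFrom (E : V → V → Prop) (l : List V) (s v : V) : Prop :=
  l.Chain' E ∧ l.head? = some s ∧ l.getLast? = some v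

/-- `l` is a shortest path along `E` from the set `S` to `v`:
it starts at some node of `S`, ends at `v`, and its number of edges equals `eDist E S v`. -/
def IsShortestPath (E : V → V → Prop) (S : Set V) (v : V) (l : List V) : Prop :=
  (∃ s ∈ S, IsPathFrom E l s v) ∧ (l.length : ℕ∞) = eDist E S v + 1

/-- `v` is negatively activated (-active) under positive seeds `S` and negative seeds `N₀`. -/
def NegActive (pos neg : V → V → Prop) (N₀ S : Set V) (v : V) : Prop :=
  eDist neg N₀ v < ⊤ ∧ eDist neg N₀ v ≤ eDist pos S v

/-- Influence blocking set: vertices -active with empty positive seed set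
but not -active with positive seed set `S`. -/
def IBS (pos neg : V → V → Prop) (N₀ S : Set V) : Set V :=
  {v | NegActive pos neg N₀ ∅ v ∧ ¬ NegActive pos neg N₀ S v}

section Aux
variable {V : Type*}

lemma eDist_anti (E : V → V → Prop) {S T : Set V} (h : S ⊆ T) (v : V) :
    eDist E T v ≤ eDist E S v :=
  sInf_le_sInf (fun n ⟨m, hm, s, hs, hp⟩ => ⟨m, hm, s, h hs, hp⟩)

lemma eDist_union (E : V → V → Prop) (A B : Set V) (v : V) :
    eDist E (A ∪ B) v = eDist E A v ⊓ eDist E B v := by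
  rw [eDist, eDist, eDist, ← sInf_union]
  congr 1
  ext m
  constructor
  · rintro ⟨k, hk, s, hs | hs, hp⟩
    · exact Or.inl ⟨k, hk, s, hs, hp⟩
    · exact Or.inr ⟨k, hk, s, hs, hp⟩
  · rintro (⟨k, hk, s, hs, hp⟩ | ⟨k, hk, s, hs, hp⟩)
    · exact ⟨k, hk, s, Or.inl hs, hp⟩
    · exact ⟨k, hk, s, Or.inr hs, hp⟩

lemma eDist_empty (E : V → V → Prop) (v : V) : eDist E ∅ v = ⊤ := by
  have : {n : ℕ∞ | ∃ m : ℕ, n = (m : ℕ∞) ∧ ∃ s ∈ (∅ : Set V), PathLen E s v m} = ∅ := by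
    ext n; simp
  rw [eDist, this, sInf_empty]

lemma IBS_eq (pos neg : V → V → Prop) (N₀ S : Set V) :
    IBS pos neg N₀ S = {v | eDist neg N₀ v < ⊤ ∧ eDist pos S v < eDist neg N₀ v} := by
  ext v
  simp only [IBS, NegActive, Set.mem_setOf_eq, eDist_empty, le_top, and_true, not_and, not_le]
  constructor
  · rintro ⟨h1, h2⟩; exact ⟨h1, h2 h1⟩
  · rintro ⟨h1, h2⟩; exact ⟨h1, fun _ => h2⟩

lemma IBS_mono (pos neg : V → V → Prop) (N₀ : Set V) {S T : Set V} (h : S ⊆ T) :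
    IBS pos neg N₀ S ⊆ IBS pos neg N₀ T := by
  rw [IBS_eq, IBS_eq]
  rintro v ⟨h1, h2⟩
  exact ⟨h1, lt_of_le_of_lt (eDist_anti pos h v) h2⟩

lemma IBS_key (pos neg : V → V → Prop) (N₀ : Set V) {S T : Set V} (h : S ⊆ T) (x : V) :
    IBS pos neg N₀ (T ∪ {x}) ⊆ IBS pos neg N₀ T ∪ IBS pos neg N₀ (S ∪ {x}) := by
  simp only [IBS_eq]
  rintro v ⟨h1, h2⟩
  by_cases hT : eDist pos T v < eDist neg N₀ v
  · exact Or.inl ⟨h1, hT⟩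
  · push_neg at hT
    refine Or.inr ⟨h1, ?_⟩
    rw [eDist_union] at h2 ⊢
    rcases inf_lt_iff.mp h2 with h | h
    · exact absurd (lt_of_le_of_lt hT h) (lt_irrefl _)
    · exact inf_lt_iff.mpr (Or.inr h)

lemma IBS_card_ineq [Fintype V] (pos neg : V → V → Prop) (N₀ : Set V) {S T : Set V}
    (h : S ⊆ T) (x : V) :
    (IBS pos neg N₀ (T ∪ {x})).ncard + (IBS pos neg N₀ S).ncard ≤
      (IBS pos neg N₀ (S ∪ {x})).ncard + (IBS pos neg N₀ T).ncard := by
  set a := IBS pos neg N₀ S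
  set b := IBS pos neg N₀ T
  set cc := IBS pos neg N₀ (S ∪ {x})
  set d := IBS pos neg N₀ (T ∪ {x})
  have hab : a ⊆ b := IBS_mono pos neg N₀ h
  have hbd : b ⊆ d := IBS_mono pos neg N₀ Set.subset_union_left
  have hac : a ⊆ cc := IBS_mono pos neg N₀ Set.subset_union_left
  have hdiff : d \ b ⊆ cc \ a := by
    rintro v ⟨hv1, hv2⟩
    rcases IBS_key pos neg N₀ h x hv1 with hv | hv
    · exact absurd hv hv2
    · exact ⟨hv, fun ha => hv2 (hab ha)⟩
  have h1 : (d \ b).ncard + b.ncard = d.ncard :=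
    Set.ncard_diff_add_ncard_of_subset hbd (Set.toFinite d)
  have h2 : (cc \ a).ncard + a.ncard = cc.ncard :=
    Set.ncard_diff_add_ncard_of_subset hac (Set.toFinite cc)
  have h3 : (d \ b).ncard ≤ (cc \ a).ncard :=
    Set.ncard_le_ncard hdiff (Set.toFinite _)
  omega

end Aux
/-- A finite convex combination (expectation) of the functions `S ↦ |IBS_ω(S)|` over
live-path graphs `ω` with common negative seed set `N₀` is monotone and submodular on
subsets of `V \ N₀`. -/
theorem stmt8 [Fintype V] (N₀ : Set V) (n : ℕ)
    (pos neg : Fin n → V → V → Prop)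
    (hpos : ∀ i, LivePathRel (pos i)) (hneg : ∀ i, LivePathRel (neg i))
    (c : Fin n → ℝ) (hc : ∀ i, 0 ≤ c i) (hc1 : ∑ i, c i = 1)
    (f : Set V → ℝ)
    (hf : ∀ S : Set V, f S = ∑ i, c i * ((IBS (pos i) (neg i) N₀ S).ncard : ℝ)) :
    (∀ S T : Set V, S ⊆ T → T ⊆ {v | v ∉ N₀} → f S ≤ f T) ∧
    (∀ S T : Set V, S ⊆ T → T ⊆ {v | v ∉ N₀} → ∀ x, x ∉ T → x ∉ N₀ →
      f (T ∪ {x}) - f T ≤ f (S ∪ {x}) - f S) := by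
  constructor
  · intro S T hST _
    rw [hf S, hf T]
    apply Finset.sum_le_sum
    intro i _
    apply mul_le_mul_of_nonneg_left _ (hc i)
    exact_mod_cast Set.ncard_le_ncard (IBS_mono (pos i) (neg i) N₀ hST) (Set.toFinite _)
  · intro S T hST _ x _ _
    rw [hf S, hf T, hf (S ∪ {x}), hf (T ∪ {x})]
    rw [sub_le_sub_iff, ← Finset.sum_add_distrib, ← Finset.sum_add_distrib]
    apply Finset.sum_le_sum
    intro i _
    rw [← mul_add, ← mul_add]
    apply mul_le_mul_of_nonneg_left _ (hc i)
    exact_mod_cast IBS_card_ineq (pos i) (neg i) N₀ hST x
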